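/- Let m and n be positive integers and suppose that for some 1 ≤ i ≤ n the number m+i is composite and m+i ∉ H_n. Then there is a prime p such that p^{v_p(m+i)} > n, and for any such prime p one has 1 ≤ v_p(C(m+n, n)) ≤ v_p(m+i). -/

import Mathlib

/-- `H n` is the set of composite positive integers `x` such that
`p^{v_p(x)} ≤ n` for every prime `p` dividing `x`. -/
def Hset (n : ℕ) : Set ℕ :=
  {x | 1 < x ∧ ¬ x.Prime ∧ ∀ p : ℕ, p.Prime → p ∣ x → p ^ (x.factorization p) ≤ n}

/-- **Lemma 2.** If `m+i` is composite and `m+i ∉ H_n` for some `1 ≤ i ≤ n`, then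
there is a prime `p` with `p^{v_p(m+i)} > n`, and for any such prime,
`1 ≤ v_p(C(m+n,n)) ≤ v_p(m+i)`. -/
theorem exists_prime_pow_gt_and_factorization_choose
    (m n i : ℕ) (hm : 0 < m) (hi : i ∈ Finset.Icc 1 n)
    (hcomp : 1 < m + i ∧ ¬ (m + i).Prime) (hH : m + i ∉ Hset n) :
    (∃ p : ℕ, p.Prime ∧ p ^ ((m + i).factorization p) > n) ∧
    (∀ p : ℕ, p.Prime → p ^ ((m + i).factorization p) > n →
      1 ≤ (Nat.choose (m + n) n).factorization p ∧
      (Nat.choose (m + n) n).factorization p ≤ (m + i).factorization p) := by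
  obtain ⟨hi1, hin⟩ := Finset.mem_Icc.mp hi
  have hmi_ne : m + i ≠ 0 := by omega
  constructor
  · simp only [Hset, Set.mem_setOf_eq, not_and, not_forall] at hH
    obtain ⟨p, hp, _, hgt⟩ := hH hcomp.1 hcomp.2
    exact ⟨p, hp, by omega⟩
  · intro p hp hgt
    haveI : Fact p.Prime := ⟨hp⟩
    set e := (m + i).factorization p with he
    have hpe_dvd : p ^ e ∣ m + i := Nat.ordProj_dvd _ _
    have hpe1 : ¬ p ^ (e + 1) ∣ m + i := Nat.pow_succ_factorization_not_dvd hmi_ne hp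
    have hn_lt : n < p ^ e := hgt
    have he1 : 1 ≤ e := by
      by_contra h
      have : e = 0 := by omega
      rw [this] at hn_lt
      simp at hn_lt
      omega
    have hpe_le : p ^ e ≤ m + n := le_trans (Nat.le_of_dvd (by omega) hpe_dvd) (by omega)
    set b := Nat.log p (m + n) + 1 with hb
    have hlogb : Nat.log p (m + n) < b := by omega
    have heb : e < b := by
      have : e ≤ Nat.log p (m + n) :=
        (Nat.le_log_iff_pow_le hp.one_lt (by omega)).mpr hpe_le
      omega
    have hkum : (Nat.choose (m + n) n).factorization p =
        ((Finset.Ico 1 b).filter fun j => p ^ j ≤ n % p ^ j + m % p ^ j).card := by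
      rw [Nat.factorization_def _ hp]
      exact padicValNat_choose' hlogb
    set S := (Finset.Ico 1 b).filter fun j => p ^ j ≤ n % p ^ j + m % p ^ j with hS
    -- e ∈ S
    have heS : e ∈ S := by
      obtain ⟨q, hq⟩ := hpe_dvd
      have hq1 : 1 ≤ q := by
        rcases Nat.eq_zero_or_pos q with h | h
        · simp [h] at hq; omega
        · exact h
      have hq' : p ^ e * q = p ^ e * (q - 1) + p ^ e := by
        obtain ⟨q', rfl⟩ : ∃ q', q = q' + 1 := ⟨q - 1, by omega⟩
        simp [Nat.mul_add]
      have hm_eq : m = p ^ e * (q - 1) + (p ^ e - i) := by omega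
      have hmod : m % p ^ e = p ^ e - i := by
        rw [hm_eq, Nat.mul_add_mod, Nat.mod_eq_of_lt (by omega)]
      refine Finset.mem_filter.mpr ⟨Finset.mem_Ico.mpr ⟨he1, heb⟩, ?_⟩
      rw [hmod, Nat.mod_eq_of_lt hn_lt]
      omega
    -- S ⊆ Icc 1 e
    have hsub : S ⊆ Finset.Icc 1 e := by
      intro j hj
      obtain ⟨hjIco, hjcond⟩ := Finset.mem_filter.mp hj
      obtain ⟨hj1, hjb⟩ := Finset.mem_Ico.mp hjIco
      refine Finset.mem_Icc.mpr ⟨hj1, ?_⟩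
      by_contra h
      have hje : e < j := by omega
      have hpej : p ^ e ∣ p ^ j := pow_dvd_pow p (le_of_lt hje)
      have hpe_lt_pj : p ^ e ≤ p ^ j := Nat.le_of_dvd (pow_pos hp.pos _) hpej
      set r := (m + i) % p ^ j with hr
      have hr_dvd : p ^ e ∣ r := (Nat.dvd_mod_iff hpej).mpr hpe_dvd
      have hr_ne : r ≠ 0 := by
        intro h0
        have : p ^ j ∣ m + i := Nat.dvd_of_mod_eq_zero h0
        exact hpe1 (dvd_trans (pow_dvd_pow p (by omega)) this)
      have hr_ge : p ^ e ≤ r := Nat.le_of_dvd (Nat.pos_of_ne_zero hr_ne) hr_dvd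
      have hr_lt : r < p ^ j := Nat.mod_lt _ (pow_pos hp.pos _)
      have hr_le : r ≤ p ^ j - p ^ e := by
        have hd : p ^ e ∣ p ^ j - r := Nat.dvd_sub hpej hr_dvd
        have : p ^ e ≤ p ^ j - r := Nat.le_of_dvd (by omega) hd
        omega
      have hdiv := Nat.mod_add_div (m + i) (p ^ j)
      set d := (m + i) / p ^ j with hd
      have hm_eq : m = p ^ j * d + (r - i) := by omega
      have hmod : m % p ^ j = r - i := by
        rw [hm_eq, Nat.mul_add_mod, Nat.mod_eq_of_lt (by omega)]
      rw [hmod, Nat.mod_eq_of_lt (lt_of_lt_of_le hn_lt hpe_lt_pj)] at hjcond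
      omega
    rw [hkum]
    constructor
    · rw [Nat.one_le_iff_ne_zero]
      intro h
      rw [Finset.card_eq_zero] at h
      rw [h] at heS
      exact absurd heS (Finset.notMem_empty _)
    · calc S.card ≤ (Finset.Icc 1 e).card := Finset.card_le_card hsub
        _ = e := by rw [Nat.card_Icc]; omega
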